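/- arXiv:1411.0358 — 4 statements merged into one kernel-verified Lean document; each statement's English description precedes it below -/
import Mathlib

section
/- Let A be a commutative algebra over ℂ, let D = (D_p)_{p≥0} be a normalized higher derivation on A, let k ≥ 0, and let φ : {0,1,...,m} → {0,1,...,n} be any map of finite sets. Then L_D^{k,(n)} ∘ L(A)(φ) = L(A)(φ) ∘ L_D^{k,(m)} as ℂ-linear maps from A^{⊗(m+1)} to A^{⊗(n+1)}. -/
open PiTensorProduct Finset
open scoped TensorProduct

section Aux

variable {A : Type*} [CommRing A] [Algebra ℂ A]

lemma hd_one (D : ℕ → (A →ₗ[ℂ] A)) (hD0 : D 0 = LinearMap.id)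
    (hD : ∀ (p : ℕ) (a a' : A),
      D p (a * a') = ∑ i ∈ Finset.range (p + 1), D i a * D (p - i) a') :
    ∀ q : ℕ, D q (1 : A) = if q = 0 then 1 else 0 := by
  intro q
  induction q using Nat.strong_induction_on with
  | _ q ih =>
    match q with
    | 0 => simp [hD0]
    | (p+1) =>
      have h := hD (p+1) 1 1
      rw [mul_one, Finset.sum_range_succ] at h
      have hmid : ∑ i ∈ Finset.range (p + 1), D i 1 * D (p + 1 - i) 1
          = D 0 1 * D (p+1) 1 := by
        refine (Finset.sum_eq_single_of_mem 0 (by simp) ?_).trans (by norm_num)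
        intro i hi hne
        rw [ih i (by simp at hi; omega), if_neg hne, zero_mul]
      rw [hmid, hD0] at h
      simp only [LinearMap.id_coe, id_eq, one_mul, mul_one, Nat.sub_self] at h
      rw [hD0] at h
      simp only [LinearMap.id_coe, id_eq, mul_one] at h
      nth_rewrite 1 [← add_zero (D (p+1) (1:A))] at h
      simp [(add_left_cancel h).symm]

/-- The produce rule for higher derivations, via power series. -/
lemma hd_prod (D : ℕ → (A →ₗ[ℂ] A)) (hD0 : D 0 = LinearMap.id)
    (hD : ∀ (p : ℕ) (a a' : A),
      D p (a * a') = ∑ i ∈ Finset.range (p + 1), D i a * D (p - i) a')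
    {ι : Type*} [DecidableEq ι] (S : Finset ι) (a : ι → A) (q : ℕ) :
    D q (∏ i ∈ S, a i) =
      ∑ p ∈ Finset.finsuppAntidiag S q, ∏ i ∈ S, D (p i) (a i) := by
  classical
  set e : A →+* PowerSeries A :=
    { toFun := fun x => PowerSeries.mk fun p => D p x
      map_one' := by
        ext p
        simp [PowerSeries.coeff_mk, hd_one D hD0 hD p, PowerSeries.coeff_one]
      map_mul' := by
        intro x y
        ext p
        rw [PowerSeries.coeff_mul]
        simp only [PowerSeries.coeff_mk]
        rw [hD p x y, Finset.Nat.sum_antidiagonal_eq_sum_range_succ_mk]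
      map_zero' := by
        ext p; simp [PowerSeries.coeff_mk]
      map_add' := by
        intro x y; ext p; simp [PowerSeries.coeff_mk] }
  have h1 : D q (∏ i ∈ S, a i) = PowerSeries.coeff q (e (∏ i ∈ S, a i)) := by
    simp only [e, RingHom.coe_mk, MonoidHom.coe_mk, OneHom.coe_mk, PowerSeries.coeff_mk]
  rw [h1, map_prod, PowerSeries.coeff_prod]
  refine Finset.sum_congr rfl fun p _ => Finset.prod_congr rfl fun i _ => ?_
  simp [e, PowerSeries.coeff_mk]

end Aux

set_option maxHeartbeats 1000000 in
/-- For a normalized higher derivation `D = (D_p)` on a commutative ℂ-algebra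
`A`, any `k ≥ 0` and any map `φ : {0,…,m} → {0,…,n}` of finite sets, the operator
`L_D^{k} = ∑_{p_0+⋯+p_n=k} D_{p_0} ⊗ ⋯ ⊗ D_{p_n}` commutes with the induced map
`L(A)(φ) : A^{⊗(m+1)} → A^{⊗(n+1)}`. -/
theorem higher_derivation_operator_commutes_with_induced_map
    {A : Type*} [CommRing A] [Algebra ℂ A]
    (D : ℕ → (A →ₗ[ℂ] A)) (hD0 : D 0 = LinearMap.id)
    (hD : ∀ (p : ℕ) (a a' : A),
      D p (a * a') = ∑ i ∈ Finset.range (p + 1), D i a * D (p - i) a')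
    (k m n : ℕ) (φ : Fin (m + 1) → Fin (n + 1))
    (LDm : (⨂[ℂ] _ : Fin (m + 1), A) →ₗ[ℂ] ⨂[ℂ] _ : Fin (m + 1), A)
    (LDn : (⨂[ℂ] _ : Fin (n + 1), A) →ₗ[ℂ] ⨂[ℂ] _ : Fin (n + 1), A)
    (Lφ : (⨂[ℂ] _ : Fin (m + 1), A) →ₗ[ℂ] ⨂[ℂ] _ : Fin (n + 1), A)
    (hLDm : ∀ a : Fin (m + 1) → A,
      LDm (tprod ℂ a) =
        ∑ p ∈ Finset.Nat.antidiagonalTuple (m + 1) k, tprod ℂ (fun i => D (p i) (a i)))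
    (hLDn : ∀ a : Fin (n + 1) → A,
      LDn (tprod ℂ a) =
        ∑ p ∈ Finset.Nat.antidiagonalTuple (n + 1) k, tprod ℂ (fun i => D (p i) (a i)))
    (hLφ : ∀ a : Fin (m + 1) → A,
      Lφ (tprod ℂ a) =
        tprod ℂ (fun j => ∏ i ∈ univ.filter fun i => φ i = j, a i)) :
    LDn ∘ₗ Lφ = Lφ ∘ₗ LDm := by
  classical
  apply PiTensorProduct.ext
  apply MultilinearMap.ext
  intro a
  simp only [LinearMap.compMultilinearMap_apply, LinearMap.comp_apply, hLφ, hLDm, hLDn,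
    map_sum]
  -- expand each LHS summand using the product rule and multilinearity
  have hrw : ∀ q : Fin (n + 1) → ℕ,
      (tprod ℂ (fun j => D (q j) (∏ i ∈ univ.filter (fun i => φ i = j), a i)))
      = ∑ r ∈ Fintype.piFinset
            (fun j => Finset.finsuppAntidiag (univ.filter fun i => φ i = j) (q j)),
          tprod ℂ (fun j => ∏ i ∈ univ.filter (fun i => φ i = j), D (r j i) (a i)) := by
    intro q
    calc tprod ℂ (fun j => D (q j) (∏ i ∈ univ.filter (fun i => φ i = j), a i))
        = tprod ℂ (fun j => ∑ r ∈ Finset.finsuppAntidiag (univ.filter fun i => φ i = j) (q j),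
            ∏ i ∈ univ.filter (fun i => φ i = j), D (r i) (a i)) := by
          congr 1; funext j; exact hd_prod D hD0 hD _ a (q j)
      _ = _ := MultilinearMap.map_sum_finset _ _ _
  simp only [hrw]
  rw [Finset.sum_sigma']
  refine Finset.sum_nbij'
    (fun x => fun i0 => (x.2 (φ i0)) i0)
    (fun p => ⟨fun j => ∑ i ∈ univ.filter (fun i => φ i = j), p i,
      fun j => Finsupp.indicator (univ.filter fun i => φ i = j) (fun i _ => p i)⟩)
    ?_ ?_ ?_ ?_ ?_
  · -- forward membership
    rintro ⟨q, r⟩ hx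
    simp only [Finset.mem_sigma, Finset.Nat.mem_antidiagonalTuple, Fintype.mem_piFinset,
      Finset.mem_finsuppAntidiag] at hx ⊢
    obtain ⟨hq, hr⟩ := hx
    rw [← Finset.sum_fiberwise univ φ (fun i0 => (r (φ i0)) i0)]
    rw [← hq]
    refine Finset.sum_congr rfl fun j _ => ?_
    rw [← (hr j).1]
    refine Finset.sum_congr rfl fun i hi => ?_
    rw [Finset.mem_filter] at hi
    rw [hi.2]
  · -- backward membership
    intro p hp
    simp only [Finset.Nat.mem_antidiagonalTuple] at hp
    simp only [Finset.mem_sigma, Finset.Nat.mem_antidiagonalTuple, Fintype.mem_piFinset,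
      Finset.mem_finsuppAntidiag]
    constructor
    · rw [← hp]
      exact Finset.sum_fiberwise univ φ p
    · intro j
      constructor
      · refine Finset.sum_congr rfl fun i hi => ?_
        exact Finsupp.indicator_of_mem hi _
      · intro i hi
        by_contra hmem
        exact (Finsupp.mem_support_iff.mp hi)
          (Finsupp.indicator_of_notMem hmem _)
  · -- left inverse
    rintro ⟨q, r⟩ hx
    simp only [Finset.mem_sigma, Finset.Nat.mem_antidiagonalTuple, Fintype.mem_piFinset,
      Finset.mem_finsuppAntidiag] at hx
    obtain ⟨hq, hr⟩ := hx
    refine Sigma.ext ?_ (heq_of_eq ?_)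
    · funext j
      show ∑ i ∈ univ.filter (fun i => φ i = j), (r (φ i)) i = q j
      rw [← (hr j).1]
      refine Finset.sum_congr rfl fun i hi => ?_
      rw [Finset.mem_filter] at hi
      rw [hi.2]
    · funext j
      ext i
      show Finsupp.indicator (univ.filter fun i' => φ i' = j) (fun i' _ => (r (φ i')) i') i
        = r j i
      by_cases hi : i ∈ univ.filter (fun i' => φ i' = j)
      · rw [Finsupp.indicator_of_mem hi]
        have h2 := (Finset.mem_filter.mp hi).2
        rw [h2]
      · rw [Finsupp.indicator_of_notMem hi]
        symm
        rw [← Finsupp.notMem_support_iff]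
        exact fun hmem => hi ((hr j).2 hmem)
  · -- right inverse
    intro p hp
    funext i
    show Finsupp.indicator (univ.filter fun i' => φ i' = φ i) (fun i' _ => p i') i = p i
    have hmem : i ∈ univ.filter (fun i' => φ i' = φ i) :=
      Finset.mem_filter.mpr ⟨Finset.mem_univ i, rfl⟩
    exact Finsupp.indicator_of_mem hmem fun i' _ => p i'
  · -- values agree
    rintro ⟨q, r⟩ hx
    congr 1
    funext j
    refine Finset.prod_congr rfl fun i hi => ?_
    have h2 := (Finset.mem_filter.mp hi).2
    show D (r j i) (a i) = D (r (φ i) i) (a i)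
    rw [h2]
end

section
/- Let A be a commutative algebra over ℂ, let D = (D_p)_{p≥0} be a normalized higher derivation on A, let q ∈ ℂ, let k ≥ 0 and let n ≥ 1. Then qb_n ∘ L_D^{k,(n)} = L_D^{k,(n−1)} ∘ qb_n as ℂ-linear maps from A^{⊗(n+1)} to A^{⊗n}. -/
open PiTensorProduct Finset
open scoped TensorProduct

lemma key_split {M : Type*} [AddCommMonoid M] (n k : ℕ)
    (pivot : Fin (n + 2)) (i' : Fin (n + 1))
    (f : (Fin (n + 2) → ℕ) → M) :
    ∑ p ∈ Finset.Nat.antidiagonalTuple (n + 2) k, f p =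
      ∑ r ∈ Finset.Nat.antidiagonalTuple (n + 1) k, ∑ s ∈ Finset.range (r i' + 1),
        f (fun m => (finSuccEquiv' pivot m).elim s (Function.update r i' (r i' - s))) := by
  classical
  set ins : (Fin (n + 1) → ℕ) → ℕ → (Fin (n + 2) → ℕ) :=
    fun r s m => (finSuccEquiv' pivot m).elim s (Function.update r i' (r i' - s)) with hins
  have hins_pivot : ∀ r s, ins r s pivot = s := by
    intro r s; simp [hins]
  have hins_other : ∀ r s j, ins r s (pivot.succAbove j) = Function.update r i' (r i' - s) j := by
    intro r s j; simp [hins]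
  set prj : (Fin (n + 2) → ℕ) → (Fin (n + 1) → ℕ) :=
    fun p => Function.update (fun j => p (pivot.succAbove j)) i'
      (p pivot + p (pivot.succAbove i')) with hprj
  have hsum : ∀ r : Fin (n + 1) → ℕ, ∑ j, r j = r i' + ∑ j ∈ Finset.univ \ {i'}, r j := by
    intro r
    have := Finset.sum_update_of_mem (Finset.mem_univ i') r (r i')
    rwa [Function.update_eq_self] at this
  rw [Finset.sum_sigma']
  refine Finset.sum_nbij' (i := fun p => ⟨prj p, p pivot⟩)
    (j := fun x => ins x.1 x.2) ?_ ?_ ?_ ?_ ?_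
  · intro p hp
    rw [Finset.Nat.mem_antidiagonalTuple] at hp
    rw [Fin.sum_univ_succAbove _ pivot] at hp
    rw [Finset.mem_sigma]
    constructor
    · rw [Finset.Nat.mem_antidiagonalTuple]
      rw [hsum (prj p)]
      have h1 : prj p i' = p pivot + p (pivot.succAbove i') := by simp [hprj]
      have h2 : ∑ j ∈ Finset.univ \ {i'}, prj p j
          = ∑ j ∈ Finset.univ \ {i'}, p (pivot.succAbove j) := by
        refine Finset.sum_congr rfl fun j hj => ?_
        simp only [Finset.mem_sdiff, Finset.mem_singleton] at hj
        simp [hprj, Function.update_of_ne hj.2]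
      rw [h1, h2, ← hp, hsum (fun j => p (pivot.succAbove j))]
      ring
    · simp [hprj]
  · intro x hx
    rw [Finset.mem_sigma] at hx
    obtain ⟨hx1, hx2⟩ := hx
    rw [Finset.Nat.mem_antidiagonalTuple] at hx1
    rw [Finset.mem_range] at hx2
    rw [Finset.Nat.mem_antidiagonalTuple]
    rw [Fin.sum_univ_succAbove _ pivot, hins_pivot]
    have h2 : ∑ j, ins x.1 x.2 (pivot.succAbove j)
        = ∑ j, Function.update x.1 i' (x.1 i' - x.2) j := by
      refine Finset.sum_congr rfl fun j _ => hins_other _ _ _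
    rw [h2, Finset.sum_update_of_mem (Finset.mem_univ i'), ← hx1, hsum x.1]
    omega
  · intro p hp
    funext m
    show ins (prj p) (p pivot) m = p m
    refine Fin.succAboveCases pivot ?_ ?_ m
    · rw [hins_pivot]
    · intro j
      rw [hins_other]
      rcases eq_or_ne j i' with rfl | hj
      · rw [Function.update_self]
        simp only [hprj, Function.update_self]
        omega
      · rw [Function.update_of_ne hj]
        simp only [hprj]
        rw [Function.update_of_ne hj]
  · intro x hx
    rw [Finset.mem_sigma] at hx
    obtain ⟨hx1, hx2⟩ := hx
    rw [Finset.mem_range] at hx2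
    have hle : x.2 ≤ x.1 i' := by omega
    have h1 : ins x.1 x.2 pivot = x.2 := hins_pivot _ _
    have h2 : prj (ins x.1 x.2) = x.1 := by
      funext j
      rcases eq_or_ne j i' with rfl | hj
      · simp only [hprj, Function.update_self]
        rw [h1, hins_other, Function.update_self]
        omega
      · simp only [hprj]
        rw [Function.update_of_ne hj, hins_other, Function.update_of_ne hj]
    obtain ⟨x1, x2⟩ := x
    simp only at h1 h2 ⊢
    simp [h1, h2]
  · intro p hp
    congr 1
    funext m
    show p m = ins (prj p) (p pivot) m
    refine (Fin.succAboveCases pivot ?_ ?_ m : ins (prj p) (p pivot) m = p m).symm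
    · rw [hins_pivot]
    · intro j
      rw [hins_other]
      rcases eq_or_ne j i' with rfl | hj
      · rw [Function.update_self]
        simp only [hprj, Function.update_self]
        omega
      · rw [Function.update_of_ne hj]
        simp only [hprj]
        rw [Function.update_of_ne hj]

/-- For a normalized higher derivation `D = (D_p)` on a commutative ℂ-algebra
`A`, any `q ∈ ℂ`, any `k ≥ 0` and any `n ≥ 1` (written here as `n + 1` for `n : ℕ`),
the operator `L_D^{k}` commutes with the `q`-Hochschild differential
`qb_{n+1} = ∑_{i=0}^{n+1} q^i d_{n+1}^i : A^{⊗(n+2)} → A^{⊗(n+1)}`: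
`qb ∘ L_D^{k,(n+1)} = L_D^{k,(n)} ∘ qb`. -/
theorem q_hochschild_differential_commutes_with_higher_derivation_operator
    {A : Type*} [CommRing A] [Algebra ℂ A]
    (D : ℕ → (A →ₗ[ℂ] A)) (hD0 : D 0 = LinearMap.id)
    (hD : ∀ (p : ℕ) (a a' : A),
      D p (a * a') = ∑ i ∈ Finset.range (p + 1), D i a * D (p - i) a')
    (q : ℂ) (k n : ℕ)
    (d : Fin (n + 2) → ((⨂[ℂ] _ : Fin (n + 2), A) →ₗ[ℂ] ⨂[ℂ] _ : Fin (n + 1), A))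
    (hd : ∀ (i : Fin (n + 2)) (a : Fin (n + 2) → A),
      d i (tprod ℂ a) =
        if (i : ℕ) < n + 1 then
          tprod ℂ (fun j : Fin (n + 1) =>
            if (j : ℕ) < (i : ℕ) then a j.castSucc
            else if (j : ℕ) = (i : ℕ) then a j.castSucc * a j.succ
            else a j.succ)
        else
          tprod ℂ (fun j : Fin (n + 1) =>
            if (j : ℕ) = 0 then a (Fin.last (n + 1)) * a 0 else a j.castSucc))
    (L₁ : (⨂[ℂ] _ : Fin (n + 2), A) →ₗ[ℂ] ⨂[ℂ] _ : Fin (n + 2), A)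
    (L₀ : (⨂[ℂ] _ : Fin (n + 1), A) →ₗ[ℂ] ⨂[ℂ] _ : Fin (n + 1), A)
    (hL₁ : ∀ a : Fin (n + 2) → A,
      L₁ (tprod ℂ a) =
        ∑ p ∈ Finset.Nat.antidiagonalTuple (n + 2) k, tprod ℂ (fun i => D (p i) (a i)))
    (hL₀ : ∀ a : Fin (n + 1) → A,
      L₀ (tprod ℂ a) =
        ∑ p ∈ Finset.Nat.antidiagonalTuple (n + 1) k, tprod ℂ (fun i => D (p i) (a i))) :
    (∑ i : Fin (n + 2), q ^ (i : ℕ) • d i) ∘ₗ L₁ =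
      L₀ ∘ₗ (∑ i : Fin (n + 2), q ^ (i : ℕ) • d i) := by
  classical
  suffices h : ∀ i : Fin (n + 2), d i ∘ₗ L₁ = L₀ ∘ₗ d i by
    apply LinearMap.ext; intro x
    simp only [LinearMap.coe_comp, Function.comp_apply, LinearMap.sum_apply,
      LinearMap.smul_apply, map_sum, map_smul]
    refine Finset.sum_congr rfl fun i _ => ?_
    have hx := LinearMap.congr_fun (h i) x
    simp only [LinearMap.coe_comp, Function.comp_apply] at hx
    rw [hx]
  intro i
  apply PiTensorProduct.ext
  apply MultilinearMap.ext
  intro a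
  simp only [LinearMap.compMultilinearMap_apply, LinearMap.coe_comp, Function.comp_apply]
  by_cases hi : (i : ℕ) < n + 1
  · -- inner face maps
    set i1 : Fin (n + 1) := ⟨(i : ℕ), hi⟩ with hi1
    have hval : (i1 : ℕ) = (i : ℕ) := rfl
    have hcs : i1.castSucc = i := by
      apply Fin.ext; simp [Fin.coe_castSucc, hval]
    have hsa_lt : ∀ j : Fin (n + 1), (j : ℕ) < (i : ℕ) → i.succAbove j = j.castSucc := by
      intro j hj
      exact Fin.succAbove_of_castSucc_lt _ _ (by rw [Fin.lt_def]; simpa using hj)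
    have hsa_ge : ∀ j : Fin (n + 1), (i : ℕ) ≤ (j : ℕ) → i.succAbove j = j.succ := by
      intro j hj
      exact Fin.succAbove_of_le_castSucc _ _ (by rw [Fin.le_def]; simpa using hj)
    have lhs_eq : ∀ p : Fin (n + 2) → ℕ,
        d i (tprod ℂ fun m => D (p m) (a m)) =
          tprod ℂ (fun j : Fin (n + 1) =>
            if (j : ℕ) < (i : ℕ) then D (p j.castSucc) (a j.castSucc)
            else if (j : ℕ) = (i : ℕ) then
              D (p j.castSucc) (a j.castSucc) * D (p j.succ) (a j.succ)
            else D (p j.succ) (a j.succ)) := by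
      intro p
      rw [hd, if_pos hi]
    have rhs_eq : d i (tprod ℂ a) =
        tprod ℂ (fun j : Fin (n + 1) =>
          if (j : ℕ) < (i : ℕ) then a j.castSucc
          else if (j : ℕ) = (i : ℕ) then a j.castSucc * a j.succ
          else a j.succ) := by
      rw [hd, if_pos hi]
    have expand : ∀ r : Fin (n + 1) → ℕ,
        tprod ℂ (fun j : Fin (n + 1) => D (r j)
            (if (j : ℕ) < (i : ℕ) then a j.castSucc
             else if (j : ℕ) = (i : ℕ) then a j.castSucc * a j.succ
             else a j.succ)) =
          ∑ s ∈ Finset.range (r i1 + 1),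
            tprod ℂ (Function.update (fun j : Fin (n + 1) => D (r j)
              (if (j : ℕ) < (i : ℕ) then a j.castSucc
               else if (j : ℕ) = (i : ℕ) then a j.castSucc * a j.succ
               else a j.succ)) i1 (D s (a i1.castSucc) * D (r i1 - s) (a i1.succ))) := by
      intro r
      have hfi : D (r i1)
            (if (i1 : ℕ) < (i : ℕ) then a i1.castSucc
             else if (i1 : ℕ) = (i : ℕ) then a i1.castSucc * a i1.succ
             else a i1.succ)
          = ∑ s ∈ Finset.range (r i1 + 1),
              D s (a i1.castSucc) * D (r i1 - s) (a i1.succ) := by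
        rw [if_neg (by rw [hval]; omega), if_pos hval]
        exact hD (r i1) _ _
      conv_lhs => rw [← Function.update_eq_self i1 (fun j : Fin (n + 1) => D (r j)
            (if (j : ℕ) < (i : ℕ) then a j.castSucc
             else if (j : ℕ) = (i : ℕ) then a j.castSucc * a j.succ
             else a j.succ))]
      rw [hfi, MultilinearMap.map_update_sum]
    calc d i (L₁ (tprod ℂ a))
        = ∑ p ∈ Finset.Nat.antidiagonalTuple (n + 2) k,
            tprod ℂ (fun j : Fin (n + 1) =>
              if (j : ℕ) < (i : ℕ) then D (p j.castSucc) (a j.castSucc)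
              else if (j : ℕ) = (i : ℕ) then
                D (p j.castSucc) (a j.castSucc) * D (p j.succ) (a j.succ)
              else D (p j.succ) (a j.succ)) := by
          rw [hL₁, map_sum]
          exact Finset.sum_congr rfl fun p _ => lhs_eq p
      _ = ∑ r ∈ Finset.Nat.antidiagonalTuple (n + 1) k, ∑ s ∈ Finset.range (r i1 + 1),
            tprod ℂ (fun j : Fin (n + 1) =>
              if (j : ℕ) < (i : ℕ) then
                D ((fun m => (finSuccEquiv' i m).elim s (Function.update r i1 (r i1 - s)))
                    j.castSucc) (a j.castSucc)
              else if (j : ℕ) = (i : ℕ) then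
                D ((fun m => (finSuccEquiv' i m).elim s (Function.update r i1 (r i1 - s)))
                    j.castSucc) (a j.castSucc) *
                  D ((fun m => (finSuccEquiv' i m).elim s (Function.update r i1 (r i1 - s)))
                    j.succ) (a j.succ)
              else D ((fun m => (finSuccEquiv' i m).elim s (Function.update r i1 (r i1 - s)))
                    j.succ) (a j.succ)) :=
          key_split n k i i1 _
      _ = ∑ r ∈ Finset.Nat.antidiagonalTuple (n + 1) k, ∑ s ∈ Finset.range (r i1 + 1),
            tprod ℂ (Function.update (fun j : Fin (n + 1) => D (r j)
              (if (j : ℕ) < (i : ℕ) then a j.castSucc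
               else if (j : ℕ) = (i : ℕ) then a j.castSucc * a j.succ
               else a j.succ)) i1 (D s (a i1.castSucc) * D (r i1 - s) (a i1.succ))) := by
          refine Finset.sum_congr rfl fun r _ => Finset.sum_congr rfl fun s _ => ?_
          congr 1
          funext j
          rcases lt_trichotomy (j : ℕ) (i : ℕ) with hj | hj | hj
          · have hne : j ≠ i1 := by
              intro hh; rw [hh, hval] at hj; omega
            have h1 : (fun m => (finSuccEquiv' i m).elim s (Function.update r i1 (r i1 - s)))
                j.castSucc = r j := by
              rw [← hsa_lt j hj]
              simp only [finSuccEquiv'_succAbove, Option.elim]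
              rw [Function.update_of_ne hne]
            rw [if_pos hj, h1, Function.update_of_ne hne, if_pos hj]
          · have hje : j = i1 := Fin.ext hj
            subst hje
            have h1 : (fun m => (finSuccEquiv' i m).elim s (Function.update r i1 (r i1 - s)))
                i1.castSucc = s := by
              rw [hcs]; simp
            have h2 : (fun m => (finSuccEquiv' i m).elim s (Function.update r i1 (r i1 - s)))
                i1.succ = r i1 - s := by
              rw [← hsa_ge i1 (le_of_eq hval.symm)]
              simp only [finSuccEquiv'_succAbove, Option.elim]
              rw [Function.update_self]
            rw [if_neg (by rw [hval]; omega), if_pos hval, h1, h2, Function.update_self]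
          · have hne : j ≠ i1 := by
              intro hh; rw [hh, hval] at hj; omega
            have h1 : (fun m => (finSuccEquiv' i m).elim s (Function.update r i1 (r i1 - s)))
                j.succ = r j := by
              rw [← hsa_ge j (le_of_lt hj)]
              simp only [finSuccEquiv'_succAbove, Option.elim]
              rw [Function.update_of_ne hne]
            rw [if_neg (by omega), if_neg (by omega), h1, Function.update_of_ne hne,
              if_neg (by omega), if_neg (by omega)]
      _ = ∑ r ∈ Finset.Nat.antidiagonalTuple (n + 1) k,
            tprod ℂ (fun j : Fin (n + 1) => D (r j)
              (if (j : ℕ) < (i : ℕ) then a j.castSucc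
               else if (j : ℕ) = (i : ℕ) then a j.castSucc * a j.succ
               else a j.succ)) :=
          Finset.sum_congr rfl fun r _ => (expand r).symm
      _ = L₀ (d i (tprod ℂ a)) := by
          rw [rhs_eq, hL₀]
  · have lhs_eq : ∀ p : Fin (n + 2) → ℕ,
        d i (tprod ℂ fun m => D (p m) (a m)) =
          tprod ℂ (fun j : Fin (n + 1) =>
            if (j : ℕ) = 0 then
              D (p (Fin.last (n + 1))) (a (Fin.last (n + 1))) * D (p 0) (a 0)
            else D (p j.castSucc) (a j.castSucc)) := by
      intro p; rw [hd, if_neg hi]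
    have rhs_eq : d i (tprod ℂ a) =
        tprod ℂ (fun j : Fin (n + 1) =>
          if (j : ℕ) = 0 then a (Fin.last (n + 1)) * a 0 else a j.castSucc) := by
      rw [hd, if_neg hi]
    have hsa : ∀ j : Fin (n + 1), (Fin.last (n + 1)).succAbove j = j.castSucc := by
      intro j; rw [Fin.succAbove_last]
    have expand : ∀ r : Fin (n + 1) → ℕ,
        tprod ℂ (fun j : Fin (n + 1) => D (r j)
            (if (j : ℕ) = 0 then a (Fin.last (n + 1)) * a 0 else a j.castSucc)) =
          ∑ s ∈ Finset.range (r 0 + 1),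
            tprod ℂ (Function.update (fun j : Fin (n + 1) => D (r j)
              (if (j : ℕ) = 0 then a (Fin.last (n + 1)) * a 0 else a j.castSucc)) 0
              (D s (a (Fin.last (n + 1))) * D (r 0 - s) (a 0))) := by
      intro r
      have hfi : D (r 0)
            (if (((0 : Fin (n + 1))) : ℕ) = 0 then a (Fin.last (n + 1)) * a 0
             else a (0 : Fin (n + 1)).castSucc)
          = ∑ s ∈ Finset.range (r 0 + 1),
              D s (a (Fin.last (n + 1))) * D (r 0 - s) (a 0) := by
        rw [if_pos (Fin.val_zero _)]
        exact hD (r 0) _ _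
      conv_lhs => rw [← Function.update_eq_self 0 (fun j : Fin (n + 1) => D (r j)
          (if (j : ℕ) = 0 then a (Fin.last (n + 1)) * a 0 else a j.castSucc))]
      rw [hfi, MultilinearMap.map_update_sum]
    calc d i (L₁ (tprod ℂ a))
        = ∑ p ∈ Finset.Nat.antidiagonalTuple (n + 2) k,
            tprod ℂ (fun j : Fin (n + 1) =>
              if (j : ℕ) = 0 then
                D (p (Fin.last (n + 1))) (a (Fin.last (n + 1))) * D (p 0) (a 0)
              else D (p j.castSucc) (a j.castSucc)) := by
          rw [hL₁, map_sum]
          exact Finset.sum_congr rfl fun p _ => lhs_eq p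
      _ = ∑ r ∈ Finset.Nat.antidiagonalTuple (n + 1) k, ∑ s ∈ Finset.range (r 0 + 1),
            tprod ℂ (fun j : Fin (n + 1) =>
              if (j : ℕ) = 0 then
                D ((fun m => (finSuccEquiv' (Fin.last (n + 1)) m).elim s
                    (Function.update r 0 (r 0 - s))) (Fin.last (n + 1)))
                    (a (Fin.last (n + 1))) *
                  D ((fun m => (finSuccEquiv' (Fin.last (n + 1)) m).elim s
                    (Function.update r 0 (r 0 - s))) 0) (a 0)
              else D ((fun m => (finSuccEquiv' (Fin.last (n + 1)) m).elim s
                    (Function.update r 0 (r 0 - s))) j.castSucc) (a j.castSucc)) :=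
          key_split n k (Fin.last (n + 1)) 0 _
      _ = ∑ r ∈ Finset.Nat.antidiagonalTuple (n + 1) k, ∑ s ∈ Finset.range (r 0 + 1),
            tprod ℂ (Function.update (fun j : Fin (n + 1) => D (r j)
              (if (j : ℕ) = 0 then a (Fin.last (n + 1)) * a 0 else a j.castSucc)) 0
              (D s (a (Fin.last (n + 1))) * D (r 0 - s) (a 0))) := by
          refine Finset.sum_congr rfl fun r _ => Finset.sum_congr rfl fun s _ => ?_
          congr 1
          funext j
          rcases eq_or_ne j 0 with rfl | hj
          · have h1 : (fun m => (finSuccEquiv' (Fin.last (n + 1)) m).elim s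
                (Function.update r 0 (r 0 - s))) (Fin.last (n + 1)) = s := by
              simp
            have h2 : (fun m => (finSuccEquiv' (Fin.last (n + 1)) m).elim s
                (Function.update r 0 (r 0 - s))) 0 = r 0 - s := by
              rw [show ((0 : Fin (n + 2))) = (Fin.last (n + 1)).succAbove 0 by
                rw [hsa 0, Fin.castSucc_zero]]
              simp only [finSuccEquiv'_succAbove, Option.elim]
              rw [Function.update_self]
            rw [if_pos (Fin.val_zero _), h1, h2, Function.update_self]
          · have hj' : ¬((j : ℕ) = 0) := by
              intro h; exact hj (Fin.ext (by rw [h, Fin.val_zero]))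
            have h1 : (fun m => (finSuccEquiv' (Fin.last (n + 1)) m).elim s
                (Function.update r 0 (r 0 - s))) j.castSucc = r j := by
              rw [← hsa j]
              simp only [finSuccEquiv'_succAbove, Option.elim]
              rw [Function.update_of_ne hj]
            rw [if_neg hj', h1, Function.update_of_ne hj, if_neg hj']
      _ = ∑ r ∈ Finset.Nat.antidiagonalTuple (n + 1) k,
            tprod ℂ (fun j : Fin (n + 1) => D (r j)
              (if (j : ℕ) = 0 then a (Fin.last (n + 1)) * a 0 else a j.castSucc)) :=
          Finset.sum_congr rfl fun r _ => (expand r).symm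
      _ = L₀ (d i (tprod ℂ a)) := by
          rw [rhs_eq, hL₀]
end

section
/- Let A be a commutative algebra over ℂ, let D = (D_p)_{p≥0} be a normalized higher derivation on A, let k ≥ 0, let N ≥ 2 and let q ∈ ℂ be a primitive N-th root of unity. Fix integers n ≥ i ≥ 1 with i ≤ N−1, and let (qb)^i : A^{⊗(n+1)} → A^{⊗(n−i+1)} and (qb)^{N−i} : A^{⊗(n+N−i+1)} → A^{⊗(n+1)} denote the indicated composites of q-Hochschild differentials. Then L_D^{k,(n)} maps ker((qb)^i) into ker((qb)^i) and maps range((qb)^{N−i}) into range((qb)^{N−i}); consequently the higher derivation D induces, for each k, a ℂ-linear endomorphism of the q-Hochschild homology group H_{i,n} := ker((qb)^i) / (ker((qb)^i) ∩ range((qb)^{N−i})). -/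
set_option maxHeartbeats 1600000


open PiTensorProduct Finset
open scoped TensorProduct

/-- The `q`-Hochschild differential `qb_s : A^{⊗(s+1)} → A^{⊗s}` built from a family `d` of
face maps, namely `qb_s = ∑_{i=0}^{s} q^i d_s^i` for `s ≥ 1` (and `0`, unused, for `s = 0`). -/
noncomputable def qbChain {A : Type*} [CommRing A] [Algebra ℂ A] (q : ℂ)
    (d : ∀ m : ℕ, Fin (m + 2) → ((⨂[ℂ] _ : Fin (m + 2), A) →ₗ[ℂ] ⨂[ℂ] _ : Fin (m + 1), A)) :
    ∀ s : ℕ, (⨂[ℂ] _ : Fin (s + 1), A) →ₗ[ℂ] ⨂[ℂ] _ : Fin s, A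
  | 0 => 0
  | s + 1 => ∑ i : Fin (s + 2), q ^ (i : ℕ) • d s i

/-- The composite `qb_{base+1} ∘ ⋯ ∘ qb_{base+k} : A^{⊗(base+k+1)} → A^{⊗(base+1)}`
(with the convention of `qbChain`), i.e. the `k`-fold iterate of the `q`-Hochschild
differential ending at tensor degree `base`. -/
noncomputable def qbIter {A : Type*} [CommRing A] [Algebra ℂ A] (q : ℂ)
    (d : ∀ m : ℕ, Fin (m + 2) → ((⨂[ℂ] _ : Fin (m + 2), A) →ₗ[ℂ] ⨂[ℂ] _ : Fin (m + 1), A)) :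
    ∀ (k base : ℕ), (⨂[ℂ] _ : Fin (base + k), A) →ₗ[ℂ] ⨂[ℂ] _ : Fin base, A
  | 0, _ => LinearMap.id
  | k + 1, base => qbIter q d k base ∘ₗ qbChain q d (base + k)


section Aux
variable {A : Type*} [CommRing A] [Algebra ℂ A]

noncomputable def Lop (D : ℕ → (A →ₗ[ℂ] A)) (k m : ℕ) :
    (⨂[ℂ] _ : Fin m, A) →ₗ[ℂ] ⨂[ℂ] _ : Fin m, A :=
  ∑ p ∈ Finset.Nat.antidiagonalTuple m k, PiTensorProduct.map (fun s => D (p s))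

lemma Lop_tprod (D : ℕ → (A →ₗ[ℂ] A)) (k m : ℕ) (a : Fin m → A) :
    Lop D k m (tprod ℂ a)
      = ∑ p ∈ Finset.Nat.antidiagonalTuple m k, tprod ℂ (fun s => D (p s) (a s)) := by
  simp [Lop, LinearMap.sum_apply, PiTensorProduct.map_tprod]


lemma sum_update_add {n : ℕ} (f : Fin n → ℕ) (i : Fin n) (v : ℕ) :
    f i + ∑ s, Function.update f i v s = v + ∑ s, f s := by
  rw [Finset.sum_update_of_mem (Finset.mem_univ _), ← Finset.erase_eq,
    ← Finset.add_sum_erase Finset.univ f (Finset.mem_univ i)]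
  ring

variable (D : ℕ → (A →ₗ[ℂ] A))
  (hD : ∀ (p : ℕ) (a a' : A),
      D p (a * a') = ∑ i ∈ Finset.range (p + 1), D i a * D (p - i) a')
  (d : ∀ m : ℕ, Fin (m + 2) → ((⨂[ℂ] _ : Fin (m + 2), A) →ₗ[ℂ] ⨂[ℂ] _ : Fin (m + 1), A))
  (hd : ∀ (m : ℕ) (l : Fin (m + 2)) (a : Fin (m + 2) → A),
      d m l (tprod ℂ a) =
        if (l : ℕ) < m + 1 then
          tprod ℂ (fun s : Fin (m + 1) =>
            if (s : ℕ) < (l : ℕ) then a s.castSucc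
            else if (s : ℕ) = (l : ℕ) then a s.castSucc * a s.succ
            else a s.succ)
        else
          tprod ℂ (fun s : Fin (m + 1) =>
            if (s : ℕ) = 0 then a (Fin.last (m + 1)) * a 0 else a s.castSucc))

include hD hd in
lemma d_comm_tprod (k m : ℕ) (l : Fin (m + 2)) (a : Fin (m + 2) → A) :
    d m l (Lop D k (m + 2) (tprod ℂ a)) = Lop D k (m + 1) (d m l (tprod ℂ a)) := by
  rw [Lop_tprod, map_sum, hd m l a]
  by_cases hl : (l : ℕ) < m + 1
  · rw [if_pos hl, Lop_tprod]
    set l' : Fin (m + 1) := ⟨l, hl⟩ with hl'def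
    have hcast : l'.castSucc = l := by ext; simp [l']
    have hval : ((l' : Fin (m + 1)) : ℕ) = (l : ℕ) := rfl
    have h4 : l.succAbove l' = l'.succ := by
      rw [← hcast]; exact Fin.succAbove_of_le_castSucc _ _ le_rfl
    have key : ∀ p' : Fin (m + 1) → ℕ,
        (tprod ℂ (fun s => D (p' s)
            (if (s : ℕ) < (l : ℕ) then a s.castSucc
             else if (s : ℕ) = (l : ℕ) then a s.castSucc * a s.succ
             else a s.succ)))
          = ∑ r ∈ Finset.range (p' l' + 1),
              tprod ℂ (Function.update (fun s => D (p' s)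
                (if (s : ℕ) < (l : ℕ) then a s.castSucc
                 else if (s : ℕ) = (l : ℕ) then a s.castSucc * a s.succ
                 else a s.succ)) l'
                (D r (a l'.castSucc) * D (p' l' - r) (a l'.succ))) := by
      intro p'
      set f : Fin (m + 1) → A := fun s => D (p' s)
          (if (s : ℕ) < (l : ℕ) then a s.castSucc
           else if (s : ℕ) = (l : ℕ) then a s.castSucc * a s.succ
           else a s.succ) with hf
      have hfl : f l' = ∑ r ∈ Finset.range (p' l' + 1),
          D r (a l'.castSucc) * D (p' l' - r) (a l'.succ) := by
        simp only [hf, hval, lt_irrefl, if_false, if_pos rfl]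
        exact hD _ _ _
      calc tprod ℂ f = tprod ℂ (Function.update f l' (f l')) := by
              rw [Function.update_eq_self]
        _ = tprod ℂ (Function.update f l' (∑ r ∈ Finset.range (p' l' + 1),
              D r (a l'.castSucc) * D (p' l' - r) (a l'.succ))) := by rw [hfl]
        _ = _ := MultilinearMap.map_update_sum _ _ _ _ _
    rw [Finset.sum_congr rfl fun p' _ => key p', Finset.sum_sigma']
    simp only [hd, hl, if_true]
    refine Finset.sum_nbij'
      (fun p => ⟨Function.update (fun s => p (l.succAbove s)) l' (p l + p l'.succ), p l⟩)
      (fun x => l.insertNth x.2 (Function.update x.1 l' (x.1 l' - x.2))) ?_ ?_ ?_ ?_ ?_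
    · intro p hp
      rw [Finset.Nat.mem_antidiagonalTuple] at hp
      rw [Finset.mem_sigma]
      dsimp only
      constructor
      · rw [Finset.Nat.mem_antidiagonalTuple]
        have h1 : ∑ s : Fin (m + 2), p s = p l + ∑ s : Fin (m + 1), p (l.succAbove s) :=
          Fin.sum_univ_succAbove p l
        have h2 := sum_update_add (fun s => p (l.succAbove s)) l' (p l + p l'.succ)
        rw [h4] at h2
        omega
      · rw [Function.update_self, Finset.mem_range]
        omega
    · rintro ⟨p', r⟩ h
      simp only [Finset.mem_sigma, Finset.Nat.mem_antidiagonalTuple, Finset.mem_range] at h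
      obtain ⟨hp', hr⟩ := h
      rw [Finset.Nat.mem_antidiagonalTuple]
      dsimp only
      have h1 : ∑ s : Fin (m + 2), l.insertNth r (Function.update p' l' (p' l' - r)) s
          = r + ∑ s : Fin (m + 1), Function.update p' l' (p' l' - r) s := by
        rw [Fin.sum_univ_succAbove _ l, Fin.insertNth_apply_same]
        congr 1
        exact Finset.sum_congr rfl fun s _ => Fin.insertNth_apply_succAbove _ _ _ _
      have h2 := sum_update_add p' l' (p' l' - r)
      rw [h1]
      omega
    · intro p hp
      dsimp only
      funext s
      by_cases hs : s = l
      · rw [hs, Fin.insertNth_apply_same]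
      · obtain ⟨u, hu⟩ := Fin.exists_succAbove_eq hs
        rw [← hu, Fin.insertNth_apply_succAbove]
        by_cases hu' : u = l'
        · rw [hu', Function.update_self, Function.update_self, h4]
          omega
        · rw [Function.update_of_ne hu', Function.update_of_ne hu']
    · rintro ⟨p', r⟩ h
      simp only [Finset.mem_sigma, Finset.Nat.mem_antidiagonalTuple, Finset.mem_range] at h
      obtain ⟨hp', hr⟩ := h
      dsimp only
      have e2 : (l.insertNth r (Function.update p' l' (p' l' - r)) : Fin (m + 2) → ℕ) l'.succ
          = p' l' - r := by
        rw [← h4, Fin.insertNth_apply_succAbove, Function.update_self]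
      refine Sigma.ext ?_ (heq_of_eq ?_)
      · dsimp only
        funext s
        by_cases hs : s = l'
        · rw [hs, Function.update_self, Fin.insertNth_apply_same, e2]
          omega
        · rw [Function.update_of_ne hs, Fin.insertNth_apply_succAbove,
            Function.update_of_ne hs]
      · dsimp only
        exact Fin.insertNth_apply_same _ _ _
    · intro p hp
      dsimp only
      congr 1
      funext s
      by_cases hs : (s : ℕ) = (l : ℕ)
      · have hsl : s = l' := by ext; exact hs
        rw [hsl, Function.update_self, Function.update_self]
        have h5 : p l + p l'.succ - p l = p l'.succ := by omega
        rw [h5]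
        simp only [hval, lt_irrefl, if_false, if_pos rfl, hcast, if_true, eq_self_iff_true]
      · have hs' : s ≠ l' := fun h => hs (by rw [h])
        rw [Function.update_of_ne hs', Function.update_of_ne hs']
        by_cases hlt : (s : ℕ) < (l : ℕ)
        · have hab : l.succAbove s = s.castSucc :=
            Fin.succAbove_of_castSucc_lt _ _ (by rw [Fin.lt_def]; exact hlt)
          simp only [if_pos hlt, hab]
        · have hgt : (l : ℕ) < (s : ℕ) := by omega
          have hab : l.succAbove s = s.succ :=
            Fin.succAbove_of_le_castSucc _ _ (by rw [Fin.le_def]; simpa using le_of_lt hgt)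
          simp only [if_neg hlt, if_neg hs, hab]
  · rw [if_neg hl, Lop_tprod]
    have h0 : ((0 : Fin (m + 1)) : ℕ) = 0 := rfl
    have hc0 : (0 : Fin (m + 1)).castSucc = (0 : Fin (m + 2)) := by ext; simp
    have key : ∀ p' : Fin (m + 1) → ℕ,
        (tprod ℂ (fun s => D (p' s)
            (if (s : ℕ) = 0 then a (Fin.last (m + 1)) * a 0 else a s.castSucc)))
          = ∑ r ∈ Finset.range (p' 0 + 1),
              tprod ℂ (Function.update (fun s => D (p' s)
                (if (s : ℕ) = 0 then a (Fin.last (m + 1)) * a 0 else a s.castSucc)) 0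
                (D r (a (Fin.last (m + 1))) * D (p' 0 - r) (a 0))) := by
      intro p'
      set f : Fin (m + 1) → A := fun s => D (p' s)
          (if (s : ℕ) = 0 then a (Fin.last (m + 1)) * a 0 else a s.castSucc) with hf
      have hfl : f 0 = ∑ r ∈ Finset.range (p' 0 + 1),
          D r (a (Fin.last (m + 1))) * D (p' 0 - r) (a 0) := by
        simp only [hf, h0, eq_self_iff_true, if_true]
        exact hD _ _ _
      calc tprod ℂ f = tprod ℂ (Function.update f 0 (f 0)) := by
              rw [Function.update_eq_self]
        _ = tprod ℂ (Function.update f 0 (∑ r ∈ Finset.range (p' 0 + 1),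
              D r (a (Fin.last (m + 1))) * D (p' 0 - r) (a 0))) := by rw [hfl]
        _ = _ := MultilinearMap.map_update_sum _ _ _ _ _
    rw [Finset.sum_congr rfl fun p' _ => key p', Finset.sum_sigma']
    simp only [hd, hl, if_false]
    refine Finset.sum_nbij'
      (fun p => ⟨Function.update (fun s : Fin (m + 1) => p s.castSucc) 0
          (p (Fin.last (m + 1)) + p 0), p (Fin.last (m + 1))⟩)
      (fun x => Fin.snoc (Function.update x.1 0 (x.1 0 - x.2)) x.2) ?_ ?_ ?_ ?_ ?_
    · intro p hp
      rw [Finset.Nat.mem_antidiagonalTuple] at hp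
      rw [Finset.mem_sigma]
      dsimp only
      constructor
      · rw [Finset.Nat.mem_antidiagonalTuple]
        have h1 : ∑ s : Fin (m + 2), p s
            = ∑ s : Fin (m + 1), p s.castSucc + p (Fin.last (m + 1)) :=
          Fin.sum_univ_castSucc p
        have h2 := sum_update_add (fun s : Fin (m + 1) => p s.castSucc) 0
          (p (Fin.last (m + 1)) + p 0)
        rw [hc0] at h2
        omega
      · rw [Function.update_self, Finset.mem_range]
        omega
    · rintro ⟨p', r⟩ h
      simp only [Finset.mem_sigma, Finset.Nat.mem_antidiagonalTuple, Finset.mem_range] at h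
      obtain ⟨hp', hr⟩ := h
      rw [Finset.Nat.mem_antidiagonalTuple]
      dsimp only
      have h1 : ∑ s : Fin (m + 2), Fin.snoc (Function.update p' 0 (p' 0 - r)) r s
          = ∑ s : Fin (m + 1), Function.update p' 0 (p' 0 - r) s + r := by
        rw [Fin.sum_univ_castSucc]
        simp [Fin.snoc_castSucc, Fin.snoc_last]
      have h2 := sum_update_add p' 0 (p' 0 - r)
      omega
    · intro p hp
      dsimp only
      funext s
      induction s using Fin.lastCases with
      | last => simp [Fin.snoc_last]
      | cast u =>
        rw [Fin.snoc_castSucc]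
        by_cases hu : u = 0
        · rw [hu, Function.update_self, Function.update_self, hc0]
          omega
        · rw [Function.update_of_ne hu, Function.update_of_ne hu]
    · rintro ⟨p', r⟩ h
      simp only [Finset.mem_sigma, Finset.Nat.mem_antidiagonalTuple, Finset.mem_range] at h
      obtain ⟨hp', hr⟩ := h
      dsimp only
      have eP0 : (Fin.snoc (Function.update p' 0 (p' 0 - r)) r : Fin (m + 2) → ℕ) 0
          = p' 0 - r := by
        rw [← hc0, Fin.snoc_castSucc, Function.update_self]
      refine Sigma.ext ?_ (heq_of_eq ?_)
      · dsimp only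
        funext s
        by_cases hs : s = 0
        · rw [hs, Function.update_self, Fin.snoc_last, eP0]
          omega
        · rw [Function.update_of_ne hs, Fin.snoc_castSucc, Function.update_of_ne hs]
      · dsimp only
        exact Fin.snoc_last _ _
    · intro p hp
      dsimp only
      congr 1
      funext s
      by_cases hs : s = 0
      · rw [hs, Function.update_self, Function.update_self]
        have h5 : p (Fin.last (m + 1)) + p 0 - p (Fin.last (m + 1)) = p 0 := by omega
        rw [h5]
        simp only [h0, eq_self_iff_true, if_true]
      · have hs0 : ¬ ((s : ℕ) = 0) := fun h => hs (by ext; simpa using h)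
        rw [Function.update_of_ne hs, Function.update_of_ne hs]
        simp only [if_neg hs0]

include hD hd in
lemma d_comm (k m : ℕ) (l : Fin (m + 2)) :
    d m l ∘ₗ Lop D k (m + 2) = Lop D k (m + 1) ∘ₗ d m l := by
  apply PiTensorProduct.ext
  ext a
  simpa using d_comm_tprod D hD d hd k m l a

end Aux

section Aux2
variable {A : Type*} [CommRing A] [Algebra ℂ A]
  (D : ℕ → (A →ₗ[ℂ] A))
  (hD : ∀ (p : ℕ) (a a' : A),
      D p (a * a') = ∑ i ∈ Finset.range (p + 1), D i a * D (p - i) a')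
  (d : ∀ m : ℕ, Fin (m + 2) → ((⨂[ℂ] _ : Fin (m + 2), A) →ₗ[ℂ] ⨂[ℂ] _ : Fin (m + 1), A))
  (hd : ∀ (m : ℕ) (l : Fin (m + 2)) (a : Fin (m + 2) → A),
      d m l (tprod ℂ a) =
        if (l : ℕ) < m + 1 then
          tprod ℂ (fun s : Fin (m + 1) =>
            if (s : ℕ) < (l : ℕ) then a s.castSucc
            else if (s : ℕ) = (l : ℕ) then a s.castSucc * a s.succ
            else a s.succ)
        else
          tprod ℂ (fun s : Fin (m + 1) =>
            if (s : ℕ) = 0 then a (Fin.last (m + 1)) * a 0 else a s.castSucc))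
  (q : ℂ)

include hD hd in
lemma qbChain_comm (k : ℕ) (s : ℕ) :
    qbChain q d s ∘ₗ Lop D k (s + 1) = Lop D k s ∘ₗ qbChain q d s := by
  match s with
  | 0 => simp [qbChain]
  | s + 1 =>
    show (∑ l : Fin (s + 2), q ^ (l : ℕ) • d s l) ∘ₗ Lop D k (s + 2)
        = Lop D k (s + 1) ∘ₗ (∑ l : Fin (s + 2), q ^ (l : ℕ) • d s l)
    refine LinearMap.ext fun x => ?_
    simp only [LinearMap.comp_apply, LinearMap.sum_apply, LinearMap.smul_apply, map_sum,
      map_smul]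
    refine Finset.sum_congr rfl fun l _ => ?_
    have hx := LinearMap.congr_fun (d_comm D hD d hd k s l) x
    simp only [LinearMap.comp_apply] at hx
    rw [hx]

include hD hd in
lemma qbIter_comm (k : ℕ) : ∀ (c base : ℕ),
    qbIter q d c base ∘ₗ Lop D k (base + c) = Lop D k base ∘ₗ qbIter q d c base
  | 0, base => by
    show LinearMap.id ∘ₗ Lop D k (base + 0) = Lop D k base ∘ₗ LinearMap.id
    refine LinearMap.ext fun x => ?_
    rfl
  | c + 1, base => by
    show (qbIter q d c base ∘ₗ qbChain q d (base + c)) ∘ₗ Lop D k (base + c + 1)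
        = Lop D k base ∘ₗ (qbIter q d c base ∘ₗ qbChain q d (base + c))
    rw [LinearMap.comp_assoc, qbChain_comm D hD d hd q k (base + c),
      ← LinearMap.comp_assoc, qbIter_comm k c base, LinearMap.comp_assoc]

end Aux2

/-- Let `D = (D_p)` be a normalized higher derivation on `A`, `k ≥ 0`, and let
`q` be a primitive `N`-th root of unity with `N = i + j ≥ 2`, `i, j ≥ 1`, and `n = t + i`
(so `1 ≤ i ≤ n` and `i ≤ N − 1`). The operator `L_D^{k}` on `A^{⊗(n+1)} = A^{⊗((t+1)+i)}`
preserves `ker((qb)^i)` and `range((qb)^{N−i})`, and hence induces, for each `k`, a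
ℂ-linear endomorphism of the `q`-Hochschild homology group
`H_{i,n} = ker((qb)^i) / (ker((qb)^i) ∩ range((qb)^{N−i}))`. -/
theorem higher_derivation_induces_q_hochschild_endomorphism
    {A : Type*} [CommRing A] [Algebra ℂ A]
    (D : ℕ → (A →ₗ[ℂ] A)) (hD0 : D 0 = LinearMap.id)
    (hD : ∀ (p : ℕ) (a a' : A),
      D p (a * a') = ∑ i ∈ Finset.range (p + 1), D i a * D (p - i) a')
    (k : ℕ) (N : ℕ) (q : ℂ) (hq : IsPrimitiveRoot q N)
    (t i j : ℕ) (hi : 1 ≤ i) (hj : 1 ≤ j) (hN : N = i + j)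
    (d : ∀ m : ℕ, Fin (m + 2) → ((⨂[ℂ] _ : Fin (m + 2), A) →ₗ[ℂ] ⨂[ℂ] _ : Fin (m + 1), A))
    (hd : ∀ (m : ℕ) (l : Fin (m + 2)) (a : Fin (m + 2) → A),
      d m l (tprod ℂ a) =
        if (l : ℕ) < m + 1 then
          tprod ℂ (fun s : Fin (m + 1) =>
            if (s : ℕ) < (l : ℕ) then a s.castSucc
            else if (s : ℕ) = (l : ℕ) then a s.castSucc * a s.succ
            else a s.succ)
        else
          tprod ℂ (fun s : Fin (m + 1) =>
            if (s : ℕ) = 0 then a (Fin.last (m + 1)) * a 0 else a s.castSucc))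
    (LDk : (⨂[ℂ] _ : Fin (t + 1 + i), A) →ₗ[ℂ] ⨂[ℂ] _ : Fin (t + 1 + i), A)
    (hLDk : ∀ a : Fin (t + 1 + i) → A,
      LDk (tprod ℂ a) =
        ∑ p ∈ Finset.Nat.antidiagonalTuple (t + 1 + i) k, tprod ℂ (fun s => D (p s) (a s))) :
    ∃ hker : ∀ x ∈ LinearMap.ker (qbIter q d i (t + 1)),
        LDk x ∈ LinearMap.ker (qbIter q d i (t + 1)),
      (∀ x ∈ LinearMap.range (qbIter q d j (t + 1 + i)),
        LDk x ∈ LinearMap.range (qbIter q d j (t + 1 + i))) ∧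
      ∃ Lbar :
          (LinearMap.ker (qbIter q d i (t + 1)) ⧸
            Submodule.comap (LinearMap.ker (qbIter q d i (t + 1))).subtype
              (LinearMap.range (qbIter q d j (t + 1 + i)))) →ₗ[ℂ]
          (LinearMap.ker (qbIter q d i (t + 1)) ⧸
            Submodule.comap (LinearMap.ker (qbIter q d i (t + 1))).subtype
              (LinearMap.range (qbIter q d j (t + 1 + i)))),
        ∀ (x : ⨂[ℂ] _ : Fin (t + 1 + i), A) (hx : x ∈ LinearMap.ker (qbIter q d i (t + 1))),
          Lbar (Submodule.Quotient.mk ⟨x, hx⟩) =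
            Submodule.Quotient.mk ⟨LDk x, hker x hx⟩ := by
  have hLeq : LDk = Lop D k (t + 1 + i) := by
    apply PiTensorProduct.ext
    ext a
    simp only [LinearMap.compMultilinearMap_apply]
    rw [hLDk, Lop_tprod]
  have hker : ∀ x ∈ LinearMap.ker (qbIter q d i (t + 1)),
      LDk x ∈ LinearMap.ker (qbIter q d i (t + 1)) := by
    intro x hx
    rw [LinearMap.mem_ker] at hx ⊢
    have hc := LinearMap.congr_fun (qbIter_comm D hD d hd q k i (t + 1)) x
    simp only [LinearMap.comp_apply] at hc
    rw [hLeq, hc, hx, map_zero]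
  have hrange : ∀ x ∈ LinearMap.range (qbIter q d j (t + 1 + i)),
      LDk x ∈ LinearMap.range (qbIter q d j (t + 1 + i)) := by
    rintro x ⟨y, rfl⟩
    refine ⟨Lop D k (t + 1 + i + j) y, ?_⟩
    have hc := LinearMap.congr_fun (qbIter_comm D hD d hd q k j (t + 1 + i)) y
    simp only [LinearMap.comp_apply] at hc
    rw [hLeq]
    exact hc
  refine ⟨hker, hrange, ?_⟩
  have hle : Submodule.comap (LinearMap.ker (qbIter q d i (t + 1))).subtype
        (LinearMap.range (qbIter q d j (t + 1 + i)))
      ≤ Submodule.comap (LDk.restrict hker)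
        (Submodule.comap (LinearMap.ker (qbIter q d i (t + 1))).subtype
          (LinearMap.range (qbIter q d j (t + 1 + i)))) := by
    rintro ⟨x, hx⟩ hxS
    rw [Submodule.mem_comap] at hxS ⊢
    rw [Submodule.mem_comap]
    exact hrange x hxS
  refine ⟨Submodule.mapQ _ _ (LDk.restrict hker) hle, fun x hx => ?_⟩
  rw [Submodule.mapQ_apply]
  rfl
end

section
/- Let A be a commutative algebra over ℂ, let (d_r)_{r≥1} be a sequence of ℂ-derivations of A, and let (D_p)_{p≥0} be a sequence of ℂ-linear maps A → A satisfying D_0 = id_A and, for every M ≥ 0, (M+1)·D_{M+1} = Σ_{m=0}^{M} d_{m+1} ∘ D_{M−m}. Fix n ≥ 0 and define ℂ-linear endomorphisms U_K of A^{⊗(n+1)} recursively by U_0 = id and (K+1)·U_{K+1} = Σ_{m=0}^{K} L_{d_{m+1}}^{(n)} ∘ U_{K−m} for K ≥ 0. Then for every k ≥ 0 and all a_0, ..., a_n ∈ A, U_k(a_0 ⊗ a_1 ⊗ ⋯ ⊗ a_n) = Σ_{p_0+p_1+⋯+p_n = k} D_{p_0}(a_0) ⊗ D_{p_1}(a_1)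 ⊗ ⋯ ⊗ D_{p_n}(a_n), the sum being over all (n+1)-tuples of non-negative integers summing to k. -/
open PiTensorProduct Finset
open scoped TensorProduct

/-- Let `(d_r)_{r≥1}` be a sequence of ℂ-derivations of `A` and `(D_p)`
a sequence of ℂ-linear maps with `D_0 = id` and `(M+1)·D_{M+1} = ∑_{m=0}^M d_{m+1} ∘ D_{M−m}`
(Mirzavaziri's recursion).  Define endomorphisms `U_K` of `A^{⊗(n+1)}` by `U_0 = id` and
`(K+1)·U_{K+1} = ∑_{m=0}^K L_{d_{m+1}} ∘ U_{K−m}`, where `L_{d_r}` is the Lie derivative of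
`d_r`.  Then for every `k` and all pure tensors,
`U_k(a_0 ⊗ ⋯ ⊗ a_n) = ∑_{p_0+⋯+p_n=k} D_{p_0}(a_0) ⊗ ⋯ ⊗ D_{p_n}(a_n)`. -/
theorem mirzavaziri_recursion_comultiplication
    {A : Type*} [CommRing A] [Algebra ℂ A]
    (d : ℕ → Derivation ℂ A A)
    (D : ℕ → (A →ₗ[ℂ] A)) (hD0 : D 0 = LinearMap.id)
    (hDrec : ∀ M : ℕ, ((M + 1 : ℕ) : ℂ) • D (M + 1) =
      ∑ m ∈ Finset.range (M + 1), (d (m + 1)).toLinearMap ∘ₗ D (M - m))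
    (n : ℕ)
    (Ld : ℕ → ((⨂[ℂ] _ : Fin (n + 1), A) →ₗ[ℂ] ⨂[ℂ] _ : Fin (n + 1), A))
    (hLd : ∀ (r : ℕ) (a : Fin (n + 1) → A),
      Ld r (tprod ℂ a) = ∑ i, tprod ℂ (Function.update a i (d r (a i))))
    (U : ℕ → ((⨂[ℂ] _ : Fin (n + 1), A) →ₗ[ℂ] ⨂[ℂ] _ : Fin (n + 1), A))
    (hU0 : U 0 = LinearMap.id)
    (hUrec : ∀ K : ℕ, ((K + 1 : ℕ) : ℂ) • U (K + 1) =
      ∑ m ∈ Finset.range (K + 1), Ld (m + 1) ∘ₗ U (K - m)) :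
    ∀ (k : ℕ) (a : Fin (n + 1) → A),
      U k (tprod ℂ a) =
        ∑ p ∈ Finset.Nat.antidiagonalTuple (n + 1) k, tprod ℂ (fun i => D (p i) (a i)) := by
  intro k
  induction k using Nat.strong_induction_on with
  | _ k IH =>
    intro a
    match k with
    | 0 =>
      rw [hU0]
      simp [Finset.Nat.antidiagonalTuple_zero_right, hD0]
    | (K + 1) =>
      have hc : ((K + 1 : ℕ) : ℂ) ≠ 0 := by exact_mod_cast Nat.succ_ne_zero K
      refine smul_right_injective _ hc ?_
      show ((K + 1 : ℕ) : ℂ) • U (K + 1) (tprod ℂ a) = _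
      have h1 : ((K + 1 : ℕ) : ℂ) • U (K + 1) (tprod ℂ a)
          = ∑ m ∈ Finset.range (K + 1), Ld (m + 1) (U (K - m) (tprod ℂ a)) := by
        have := congrArg (fun (f : (⨂[ℂ] _ : Fin (n + 1), A) →ₗ[ℂ] ⨂[ℂ] _ : Fin (n + 1), A) =>
          f (tprod ℂ a)) (hUrec K)
        simpa using this
      rw [h1]
      -- expand via induction hypothesis and hLd
      have h2 : ∀ m ∈ Finset.range (K + 1),
          Ld (m + 1) (U (K - m) (tprod ℂ a)) =
          ∑ q ∈ Finset.Nat.antidiagonalTuple (n + 1) (K - m), ∑ i : Fin (n + 1),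
            tprod ℂ (Function.update (fun j => D (q j) (a j)) i (d (m + 1) (D (q i) (a i)))) := by
        intro m hm
        rw [IH (K - m) (by simp at hm; omega) a, map_sum]
        exact Finset.sum_congr rfl fun q _ => hLd (m + 1) (fun j => D (q j) (a j))
      rw [Finset.sum_congr rfl h2]
      -- swap the sum over i to the outside
      rw [Finset.sum_congr rfl (fun m _ => Finset.sum_comm), Finset.sum_comm]
      -- reindex the (m, q) double sum per slot i
      have h3 : ∀ i : Fin (n + 1),
          (∑ m ∈ Finset.range (K + 1), ∑ q ∈ Finset.Nat.antidiagonalTuple (n + 1) (K - m),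
            tprod ℂ (Function.update (fun j => D (q j) (a j)) i (d (m + 1) (D (q i) (a i)))))
          = ∑ p ∈ Finset.Nat.antidiagonalTuple (n + 1) (K + 1), ∑ m ∈ Finset.range (p i),
            tprod ℂ (Function.update (fun j => D (p j) (a j)) i
              (d (m + 1) (D (p i - (m + 1)) (a i)))) := by
        intro i
        rw [Finset.sum_sigma', Finset.sum_sigma']
        refine Finset.sum_nbij' (fun x => ⟨Function.update x.2 i (x.2 i + x.1 + 1), x.1⟩)
          (fun y => ⟨y.2, Function.update y.1 i (y.1 i - (y.2 + 1))⟩) ?_ ?_ ?_ ?_ ?_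
        · rintro ⟨m, q⟩ hx
          simp only [Finset.mem_sigma, Finset.mem_range, Finset.Nat.mem_antidiagonalTuple] at hx ⊢
          obtain ⟨hm, hq⟩ := hx
          rw [Finset.sum_eq_sum_sdiff_singleton_add (Finset.mem_univ i)] at hq
          constructor
          · rw [Finset.sum_update_of_mem (Finset.mem_univ i)]
            omega
          · simp only [Function.update_self]
            omega
        · rintro ⟨p, m⟩ hy
          simp only [Finset.mem_sigma, Finset.mem_range, Finset.Nat.mem_antidiagonalTuple] at hy ⊢
          obtain ⟨hp, hm⟩ := hy
          rw [Finset.sum_eq_sum_sdiff_singleton_add (Finset.mem_univ i)] at hp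
          constructor
          · omega
          · rw [Finset.sum_update_of_mem (Finset.mem_univ i)]
            omega
        · rintro ⟨m, q⟩ hx
          simp only [Finset.mem_sigma, Finset.mem_range, Finset.Nat.mem_antidiagonalTuple] at hx
          ext1
          · rfl
          · simp only
            rw [Function.update_idem, Function.update_self]
            have : q i + m + 1 - (m + 1) = q i := by omega
            rw [this, Function.update_eq_self]
        · rintro ⟨p, m⟩ hy
          simp only [Finset.mem_sigma, Finset.mem_range, Finset.Nat.mem_antidiagonalTuple] at hy
          obtain ⟨hp, hm⟩ := hy
          ext1
          · simp only
            rw [Function.update_idem, Function.update_self]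
            have : p i - (m + 1) + m + 1 = p i := by omega
            rw [this, Function.update_eq_self]
          · rfl
        · rintro ⟨m, q⟩ hx
          show tprod ℂ (Function.update (fun j => D (q j) (a j)) i (d (m + 1) (D (q i) (a i))))
              = tprod ℂ (Function.update
                  (fun j => D ((Function.update q i (q i + m + 1)) j) (a j)) i
                  (d (m + 1)
                    (D ((Function.update q i (q i + m + 1)) i - (m + 1)) (a i))))
          have e1 : (Function.update q i (q i + m + 1)) i - (m + 1) = q i := by
            rw [Function.update_self]; omega
          have e2 : (fun j => D ((Function.update q i (q i + m + 1)) j) (a j))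
              = Function.update (fun j => D (q j) (a j)) i (D (q i + m + 1) (a i)) := by
            funext j
            rcases eq_or_ne j i with rfl | hj
            · rw [Function.update_self, Function.update_self]
            · rw [Function.update_of_ne hj, Function.update_of_ne hj]
          rw [e1, e2, Function.update_idem]
      rw [Finset.sum_congr rfl (fun i _ => h3 i)]
      -- now compute the inner sum over m using hDrec
      have h4 : ∀ (i : Fin (n + 1)) (p : Fin (n + 1) → ℕ),
          (∑ m ∈ Finset.range (p i),
            tprod ℂ (Function.update (fun j => D (p j) (a j)) i
              (d (m + 1) (D (p i - (m + 1)) (a i)))))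
          = ((p i : ℕ) : ℂ) • tprod ℂ (fun j => D (p j) (a j)) := by
        intro i p
        have key : (∑ m ∈ Finset.range (p i), d (m + 1) (D (p i - (m + 1)) (a i)))
            = ((p i : ℕ) : ℂ) • D (p i) (a i) := by
          cases hpi : p i with
          | zero => simp
          | succ M =>
            have h := congrArg (fun (f : A →ₗ[ℂ] A) => f (a i)) (hDrec M)
            simp only [LinearMap.smul_apply, LinearMap.sum_apply, LinearMap.comp_apply,
              Derivation.coeFn_coe] at h
            rw [h]
            refine Finset.sum_congr rfl fun m hm => ?_
            simp only [Finset.mem_range] at hm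
            have : M + 1 - (m + 1) = M - m := by omega
            rw [this]
        rw [← MultilinearMap.map_update_sum, key, MultilinearMap.map_update_smul]
        congr 1
        exact congrArg _ (Function.update_eq_self i _)
      rw [Finset.sum_congr rfl (fun i _ => Finset.sum_congr rfl (fun p _ => h4 i p))]
      rw [Finset.sum_comm]
      show _ = ((K + 1 : ℕ) : ℂ) •
        ∑ p ∈ Finset.Nat.antidiagonalTuple (n + 1) (K + 1), tprod ℂ (fun i => D (p i) (a i))
      rw [Finset.smul_sum]
      refine Finset.sum_congr rfl fun p hp => ?_
      rw [← Finset.sum_smul]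
      congr 1
      rw [Finset.Nat.mem_antidiagonalTuple] at hp
      rw [← Nat.cast_sum, hp]
end
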